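/- Let n ≥ 1, s ∈ (0,1), R > 1. Let Ω ⊂ ℝⁿ be a bounded open set with B_1 ⊆ Ω ⊆ B_R and dist(0, ∂Ω) = 1, and suppose there is p ∈ ∂Ω ∩ ∂B_1 such that for all sufficiently small t > 0 the point q_t := (1+t)p lies in ℝⁿ \ closure(Ω) with dist(q_t, ∂Ω) = t. Define F_Ω(y) := c(n,s)/(|y|ⁿ (dist(y,∂Ω))^s (2 + dist(y,∂Ω))^s) for y ∈ 𝒞Ω and 𝔠(Ω) := ∫_{𝒞Ω} F_Ω(y) dy. Let P_Ω : Ω × (ℝⁿ \ closure(Ω)) → [0,∞) satisfy: (i) P_Ω(0,q) = P_{B_1}(0,q) + ∫_{Ω \ B_1} P_Ω(y,q) P_{B_1}(0,y) dy for all q ∈ ℝⁿ \ closure(Ω); (ii) there exist c₀, c̄ > 0 with P_Ω(y,q) ≥ c₀ (dist(y,∂Ω))^s/(|y−q|ⁿ (dist(q,∂Ω))^s (1 + c̄ dist(q,∂Ω))^s) for all y ∈ Ω, q ∈ ℝⁿ \ closure(Ω); (iii) P_{B_1}(0,q) ≤ P_Ω(0,q) for all q ∈ ℝⁿ \ closure(Ω),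 and P_Ω(0,q) ≤ P_{B_R}(0,q) for all q with |q| > R. Assume that F_Ω(y) = 𝔠(Ω) P_Ω(0,y) for all y ∈ ℝⁿ \ closure(Ω). Then: (1) 𝔠(Ω) ∈ [R^{−2s}, 1]; (2) 𝔠(Ω) = 1 if and only if Ω = B_1. -/

import Mathlib

open MeasureTheory Metric Filter Set Topology

noncomputable section

/-- Euclidean space ℝⁿ. -/
abbrev En (n : ℕ) := EuclideanSpace ℝ (Fin n)

/-- The fractional Poisson kernel of the ball `B_R(x₀)`:
`P_{B_R(x₀)}(x,y) = c (R² − |x − x₀|²)^s / ((|y − x₀|² − R²)^s |x − y|ⁿ)`. -/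
def poissonBall (n : ℕ) (c s : ℝ) (x₀ : En n) (R : ℝ) (x y : En n) : ℝ :=
  c * (R ^ 2 - ‖x - x₀‖ ^ 2) ^ s / ((‖y - x₀‖ ^ 2 - R ^ 2) ^ s * ‖x - y‖ ^ (n : ℝ))

/-- The explicit Poisson-like kernel of formula (1.18) of the paper:
`F_Ω(y) = c / (|y|ⁿ dist(y,∂Ω)^s (2 + dist(y,∂Ω))^s)`. -/
def FOm (n : ℕ) (c s : ℝ) (Ω : Set (En n)) (y : En n) : ℝ :=
  c / (‖y‖ ^ (n : ℝ) * (infDist y (frontier Ω)) ^ s * (2 + infDist y (frontier Ω)) ^ s)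

lemma le_infDist_of {α : Type*} [PseudoMetricSpace α] {s : Set α} {x : α} {b : ℝ}
    (hs : s.Nonempty) (h : ∀ z ∈ s, b ≤ dist x z) : b ≤ Metric.infDist x s := by
  by_contra hlt
  push_neg at hlt
  obtain ⟨z, hz, hzlt⟩ := (infDist_lt_iff hs).1 hlt
  exact absurd (h z hz) (not_le.2 hzlt)

lemma rpow_sub_le {x y s : ℝ} (hy : 0 ≤ y) (hyx : y ≤ x) (hs0 : 0 ≤ s) (hs1 : s ≤ 1) :
    x ^ s - y ^ s ≤ (x - y) ^ s := by
  have hx : 0 ≤ x := hy.trans hyx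
  have h := NNReal.rpow_add_le_add_rpow (x - y).toNNReal y.toNNReal hs0 hs1
  have hadd : (x - y).toNNReal + y.toNNReal = x.toNNReal := by
    rw [← Real.toNNReal_add (by linarith) hy]; congr 1; ring
  rw [hadd] at h
  have h' : (x.toNNReal : ℝ) ^ s ≤ ((x - y).toNNReal : ℝ) ^ s + (y.toNNReal : ℝ) ^ s := by
    have := (NNReal.coe_le_coe).2 h
    push_cast [NNReal.coe_rpow] at this
    simpa using this
  rw [Real.coe_toNNReal x hx, Real.coe_toNNReal y hy, Real.coe_toNNReal _ (by linarith)] at h'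
  linarith

lemma pois1_eq (n : ℕ) (c s : ℝ) (q : En n) :
    poissonBall n c s 0 1 0 q = c / ((‖q‖ ^ 2 - 1) ^ s * ‖q‖ ^ (n : ℝ)) := by
  simp [poissonBall, Real.one_rpow]

lemma poisR_eq (n : ℕ) (c s R : ℝ) (q : En n) :
    poissonBall n c s 0 R 0 q = c * (R ^ 2) ^ s / ((‖q‖ ^ 2 - R ^ 2) ^ s * ‖q‖ ^ (n : ℝ)) := by
  simp [poissonBall]

lemma infDist_sphere_one {n : ℕ} (hn : 1 ≤ n) {y : En n} (hy : 1 ≤ ‖y‖) :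
    infDist y (sphere (0 : En n) 1) = ‖y‖ - 1 := by
  have hy0 : y ≠ 0 := by intro h; rw [h, norm_zero] at hy; linarith
  have hyn : (0:ℝ) < ‖y‖ := by linarith
  have hne : (sphere (0 : En n) 1).Nonempty := by
    refine ⟨EuclideanSpace.single (⟨0, hn⟩ : Fin n) (1:ℝ), ?_⟩
    simp [EuclideanSpace.norm_single]
  apply le_antisymm
  · have hmem : ‖y‖⁻¹ • y ∈ sphere (0 : En n) 1 := by
      simp [norm_smul, abs_of_pos (inv_pos.2 hyn), inv_mul_cancel₀ hyn.ne']
    have := infDist_le_dist_of_mem (x := y) hmem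
    have hd : dist y (‖y‖⁻¹ • y) = ‖y‖ - 1 := by
      rw [dist_eq_norm]
      have : y - ‖y‖⁻¹ • y = (1 - ‖y‖⁻¹) • y := by
        rw [sub_smul, one_smul]
      rw [this, norm_smul, Real.norm_eq_abs, abs_of_nonneg (by
        have : ‖y‖⁻¹ ≤ 1 := by
          rw [inv_le_one_iff₀]; right; exact hy
        linarith)]
      field_simp
    rwa [hd] at this
  · refine le_infDist_of hne fun z hz => ?_
    have hz1 : ‖z‖ = 1 := by simpa using hz
    have := norm_sub_norm_le y z
    rw [hz1, ← dist_eq_norm] at this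
    linarith

set_option maxHeartbeats 2000000 in
/-- conditional form of Lemma 1.8 of the paper: with
`𝔠(Ω) = ∫_{𝒞Ω} F_Ω` and `F_Ω = 𝔠(Ω) P_Ω(0,·)` outside `closure Ω`, one has
`𝔠(Ω) ∈ [R^{−2s}, 1]`, and `𝔠(Ω) = 1` if and only if `Ω = B_1`. -/
theorem frakc_bounds_and_rigidity
    (n : ℕ) (hn : 1 ≤ n) (s : ℝ) (hs : s ∈ Ioo (0 : ℝ) 1)
    (c : ℝ) (hc : 0 < c)
    (hnorm : c * ∫ y in (ball (0 : En n) 1)ᶜ, ((‖y‖ ^ 2 - 1) ^ s * ‖y‖ ^ (n : ℝ))⁻¹ = 1)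
    (R : ℝ) (hR : 1 < R)
    (Ω : Set (En n)) (hΩopen : IsOpen Ω) (hΩbd : Bornology.IsBounded Ω)
    (hB1 : ball (0 : En n) 1 ⊆ Ω) (hΩR : Ω ⊆ ball (0 : En n) R)
    (hdist : infDist 0 (frontier Ω) = 1)
    (p : En n) (hp : p ∈ frontier Ω ∩ sphere (0 : En n) 1)
    (t₀ : ℝ) (ht₀ : 0 < t₀)
    (hq : ∀ t ∈ Ioo (0 : ℝ) t₀,
      (1 + t) • p ∉ closure Ω ∧ infDist ((1 + t) • p) (frontier Ω) = t)
    (cΩ : ℝ) (hcΩ : cΩ = ∫ y in Ωᶜ, FOm n c s Ω y)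
    (P : En n → En n → ℝ)
    (hPnonneg : ∀ x ∈ Ω, ∀ q ∉ closure Ω, 0 ≤ P x q)
    -- (i) kernel identity from the Poisson representation in B₁
    (hPid : ∀ q ∉ closure Ω, P 0 q = poissonBall n c s 0 1 0 q +
      ∫ y in Ω \ ball (0 : En n) 1, P y q * poissonBall n c s 0 1 0 y)
    -- (ii) Chen–Song lower bound
    (c₀ cbar : ℝ) (hc₀ : 0 < c₀) (hcbar : 0 < cbar)
    (hPlow : ∀ y ∈ Ω, ∀ q ∉ closure Ω,
      c₀ * (infDist y (frontier Ω)) ^ s /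
        (‖y - q‖ ^ (n : ℝ) * (infDist q (frontier Ω)) ^ s *
          (1 + cbar * infDist q (frontier Ω)) ^ s) ≤ P y q)
    -- (iii) monotonicity of the Poisson kernel with respect to set inclusion
    (hmono₁ : ∀ q ∉ closure Ω, poissonBall n c s 0 1 0 q ≤ P 0 q)
    (hmono₂ : ∀ q : En n, R < ‖q‖ → P 0 q ≤ poissonBall n c s 0 R 0 q)
    -- the identity derived from the mean value hypothesis
    (hFP : ∀ q ∉ closure Ω, FOm n c s Ω q = cΩ * P 0 q) :
    (R ^ (-(2 * s)) ≤ cΩ ∧ cΩ ≤ 1) ∧ (cΩ = 1 ↔ Ω = ball 0 1) := by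
  obtain ⟨hs0, hs1⟩ := hs
  have hppos : ‖p‖ = 1 := by simpa using hp.2
  have hR0 : (0:ℝ) < R := by linarith
  have hclosR : closure Ω ⊆ closedBall (0 : En n) R := by
    rw [← closure_ball (0 : En n) hR0.ne']
    exact closure_mono hΩR
  have hfrR : frontier Ω ⊆ closedBall (0 : En n) R :=
    fun z hz => hclosR (frontier_subset_closure hz)
  have hfrne : (frontier Ω).Nonempty := ⟨p, hp.1⟩
  -- ### Part D : 0 < cΩ and cΩ ≤ 1
  have hD : 0 < cΩ ∧ cΩ ≤ 1 := by
    set t := t₀ / 2 with ht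
    have htIoo : t ∈ Ioo (0:ℝ) t₀ := ⟨by positivity, by rw [ht]; linarith⟩
    obtain ⟨hqout, hqd⟩ := hq t htIoo
    set q : En n := (1 + t) • p with hqdef
    have ht0 : 0 < t := htIoo.1
    have hnq : ‖q‖ = 1 + t := by
      rw [hqdef, norm_smul, Real.norm_eq_abs, abs_of_pos (by linarith), hppos, mul_one]
    have hpois : poissonBall n c s 0 1 0 q = c / (t ^ s * (2 + t) ^ s * (1 + t) ^ (n:ℝ)) := by
      rw [pois1_eq, hnq]
      have h1 : (1 + t) ^ 2 - 1 = t * (2 + t) := by ring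
      rw [h1, Real.mul_rpow ht0.le (by linarith)]
    have hF : FOm n c s Ω q = c / ((1 + t) ^ (n:ℝ) * t ^ s * (2 + t) ^ s) := by
      simp only [FOm]
      rw [hqd, hnq]
    have hFeqpois : FOm n c s Ω q = poissonBall n c s 0 1 0 q := by
      rw [hF, hpois]; ring_nf
    have hpoispos : 0 < poissonBall n c s 0 1 0 q := by
      rw [hpois]
      apply div_pos hc
      positivity
    have hPq := hmono₁ q hqout
    have hFPq := hFP q hqout
    have hkey : cΩ * P 0 q = poissonBall n c s 0 1 0 q := by rw [← hFPq, hFeqpois]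
    have hPpos : 0 < P 0 q := lt_of_lt_of_le hpoispos hPq
    constructor
    · by_contra h
      push_neg at h
      have : cΩ * P 0 q ≤ 0 := mul_nonpos_of_nonpos_of_nonneg h hPpos.le
      linarith
    · have h1 : cΩ * P 0 q ≤ 1 * P 0 q := by rw [one_mul, hkey]; exact hPq
      exact le_of_mul_le_mul_right h1 hPpos
  obtain ⟨hcpos, hcle⟩ := hD
  -- ### Part E : R^(-(2s)) ≤ cΩ
  have hE : R ^ (-(2 * s)) ≤ cΩ := by
    have hR2s : (0:ℝ) < (R ^ 2) ^ s := by positivity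
    have key : ∀ μ : ℝ, R + 1 ≤ μ →
        ((μ ^ 2 - R ^ 2) / (μ ^ 2 - 1)) ^ s ≤ cΩ * (R ^ 2) ^ s := by
      intro μ hμ
      set q : En n := μ • p with hqdef
      have hμpos : 0 < μ := by linarith
      have hnq : ‖q‖ = μ := by
        rw [hqdef, norm_smul, Real.norm_eq_abs, abs_of_pos hμpos, hppos, mul_one]
      have hqR : R < ‖q‖ := by rw [hnq]; linarith
      have hqout : q ∉ closure Ω := by
        intro h
        have := hclosR h
        rw [mem_closedBall, dist_zero_right] at this
        linarith [hnq ▸ this]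
      set d := infDist q (frontier Ω) with hddef
      have hd1 : d ≤ μ - 1 := by
        have h1 := infDist_le_dist_of_mem (x := q) hp.1
        have hdq : dist q p = μ - 1 := by
          rw [dist_eq_norm, hqdef]
          have h2 : μ • p - p = (μ - 1) • p := by rw [sub_smul, one_smul]
          rw [h2, norm_smul, Real.norm_eq_abs, abs_of_nonneg (by linarith), hppos, mul_one]
        rw [hdq] at h1
        exact h1
      have hd2 : μ - R ≤ d := by
        apply le_infDist_of hfrne
        intro z hz
        have hzR : ‖z‖ ≤ R := by
          have := hfrR hz
          rwa [mem_closedBall, dist_zero_right] at this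
        rw [dist_eq_norm]
        have := norm_sub_norm_le q z
        linarith [hnq ▸ this]
      have hdpos : 0 < d := by linarith
      have hFq := hFP q hqout
      have hP2 := hmono₂ q hqR
      have step1 : FOm n c s Ω q ≤ cΩ * poissonBall n c s 0 R 0 q := by
        rw [hFq]
        exact mul_le_mul_of_nonneg_left hP2 hcpos.le
      have hμ21 : 0 < μ ^ 2 - 1 := by nlinarith
      have hμ2R : 0 < μ ^ 2 - R ^ 2 := by nlinarith
      have hXle : μ ^ (n:ℝ) * d ^ s * (2 + d) ^ s ≤ μ ^ (n:ℝ) * (μ ^ 2 - 1) ^ s := by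
        rw [mul_assoc, ← Real.mul_rpow hdpos.le (by linarith)]
        apply mul_le_mul_of_nonneg_left _ (by positivity)
        exact Real.rpow_le_rpow (by positivity) (by nlinarith) hs0.le
      have hFlow : c / (μ ^ (n:ℝ) * (μ ^ 2 - 1) ^ s) ≤ FOm n c s Ω q := by
        simp only [FOm, ← hddef, hnq]
        exact div_le_div_of_nonneg_left hc.le (by positivity) hXle
      have hpoisR : poissonBall n c s 0 R 0 q
          = c * (R ^ 2) ^ s / ((μ ^ 2 - R ^ 2) ^ s * μ ^ (n:ℝ)) := by
        rw [poisR_eq, hnq]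
      have main : c / (μ ^ (n:ℝ) * (μ ^ 2 - 1) ^ s)
          ≤ cΩ * c * (R ^ 2) ^ s / ((μ ^ 2 - R ^ 2) ^ s * μ ^ (n:ℝ)) := by
        refine hFlow.trans (step1.trans_eq ?_)
        rw [hpoisR, mul_div_assoc]
        ring
      have hμn : 0 < μ ^ (n:ℝ) := by positivity
      rw [Real.div_rpow hμ2R.le hμ21.le, div_le_iff₀ (by positivity)]
      rw [div_le_div_iff₀ (by positivity) (by positivity)] at main
      have hcn : 0 < c * μ ^ (n:ℝ) := mul_pos hc hμn
      have h3 : (μ ^ 2 - R ^ 2) ^ s ≤ cΩ * (R ^ 2) ^ s * (μ ^ 2 - 1) ^ s := by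
        apply le_of_mul_le_mul_left _ hcn
        calc c * μ ^ (n:ℝ) * (μ ^ 2 - R ^ 2) ^ s
            = c * ((μ ^ 2 - R ^ 2) ^ s * μ ^ (n:ℝ)) := by ring
          _ ≤ cΩ * c * (R ^ 2) ^ s * (μ ^ (n:ℝ) * (μ ^ 2 - 1) ^ s) := main
          _ = c * μ ^ (n:ℝ) * (cΩ * (R ^ 2) ^ s * (μ ^ 2 - 1) ^ s) := by ring
      linarith
    have htend : Tendsto (fun μ : ℝ => ((μ ^ 2 - R ^ 2) / (μ ^ 2 - 1)) ^ s) atTop (𝓝 1) := by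
      have h1 : Tendsto (fun μ : ℝ => μ ^ 2 - 1) atTop atTop := by
        simpa [sub_eq_add_neg] using
          tendsto_atTop_add_const_right atTop (-1 : ℝ) (tendsto_pow_atTop two_ne_zero)
      have h0 : Tendsto (fun μ : ℝ => (R ^ 2 - 1) / (μ ^ 2 - 1)) atTop (𝓝 0) :=
        Tendsto.div_atTop tendsto_const_nhds h1
      have h2 : Tendsto (fun μ : ℝ => 1 - (R ^ 2 - 1) / (μ ^ 2 - 1)) atTop (𝓝 1) := by
        simpa using tendsto_const_nhds.sub h0
      have h3 : Tendsto (fun μ : ℝ => (μ ^ 2 - R ^ 2) / (μ ^ 2 - 1)) atTop (𝓝 1) := by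
        refine h2.congr' ?_
        filter_upwards [eventually_ge_atTop (2:ℝ)] with μ hμ
        have hne : μ ^ 2 - 1 ≠ 0 := by nlinarith
        field_simp
        ring
      have h4 := (Real.continuousAt_rpow_const 1 s (Or.inl one_ne_zero)).tendsto.comp h3
      simpa [Real.one_rpow, Function.comp_def] using h4
    have hle1 : 1 ≤ cΩ * (R ^ 2) ^ s := by
      refine le_of_tendsto htend ?_
      filter_upwards [eventually_ge_atTop (R + 1)] with μ hμ using key μ hμ
    have hrw : R ^ (-(2 * s)) = ((R ^ 2) ^ s)⁻¹ := by
      rw [← Real.rpow_natCast R 2, ← Real.rpow_mul hR0.le, ← Real.rpow_neg hR0.le]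
      norm_num
    rw [hrw, ← one_div]
    rw [div_le_iff₀ hR2s]
    linarith
  refine ⟨⟨hE, hcle⟩, ?_, ?_⟩
  · -- cΩ = 1 → Ω = ball 0 1
    intro hc1
    by_contra hne
    -- a point of Ω outside the closed unit ball (after pushing out)
    obtain ⟨x₁, hx₁Ω, hx₁B⟩ := exists_of_ssubset (hB1.ssubset_of_ne (fun h => hne h.symm))
    have hx₁n : 1 ≤ ‖x₁‖ := by
      by_contra h
      push_neg at h
      exact hx₁B (mem_ball_zero_iff.2 h)
    have hx₁0 : (0:ℝ) < ‖x₁‖ := by linarith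
    obtain ⟨ρ, hρ, hρΩ⟩ := Metric.isOpen_iff.1 hΩopen x₁ hx₁Ω
    set x₂ : En n := (1 + ρ / (2 * ‖x₁‖)) • x₁ with hx₂def
    have hfac : (0:ℝ) < 1 + ρ / (2 * ‖x₁‖) := by positivity
    have hx₂x₁ : dist x₂ x₁ = ρ / 2 := by
      rw [dist_eq_norm, hx₂def]
      have h1 : (1 + ρ / (2 * ‖x₁‖)) • x₁ - x₁ = (ρ / (2 * ‖x₁‖)) • x₁ := by
        rw [add_smul, one_smul, add_sub_cancel_left]
      rw [h1, norm_smul, Real.norm_eq_abs, abs_of_pos (by positivity)]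
      field_simp
    have hx₂Ω : x₂ ∈ Ω := hρΩ (by rw [mem_ball, hx₂x₁]; linarith)
    have hx₂n : ‖x₂‖ = ‖x₁‖ + ρ / 2 := by
      rw [hx₂def, norm_smul, Real.norm_eq_abs, abs_of_pos hfac]
      field_simp
    obtain ⟨δ, hδdef⟩ : ∃ δ : ℝ, δ = ‖x₂‖ - 1 := ⟨_, rfl⟩
    have hδ : 0 < δ := by rw [hδdef, hx₂n]; linarith
    have hx₂δ : ‖x₂‖ = 1 + δ := by rw [hδdef]; ring
    have hx₂R : ‖x₂‖ < R := mem_ball_zero_iff.1 (hΩR hx₂Ω)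
    have hx₂pos : (0:ℝ) < ‖x₂‖ := by rw [hx₂δ]; linarith
    -- a small compact ball inside Ω, away from the unit ball
    obtain ⟨r₀, hr₀, hr₀Ω⟩ := Metric.isOpen_iff.1 hΩopen x₂ hx₂Ω
    obtain ⟨r, hrdef⟩ : ∃ r : ℝ, r = min r₀ δ / 2 := ⟨_, rfl⟩
    have hrmin : 0 < min r₀ δ := lt_min hr₀ hδ
    have hr : 0 < r := by rw [hrdef]; linarith
    have hr2 : 2 * r ≤ r₀ := by
      have := min_le_left r₀ δ
      rw [hrdef]; linarith
    have hrδ : 2 * r ≤ δ := by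
      have := min_le_right r₀ δ
      rw [hrdef]; linarith
    set K : Set (En n) := closedBall x₂ r with hKdef
    have hKΩ : K ⊆ Ω := fun y hy => hr₀Ω (by
      have h1 : dist y x₂ ≤ r := mem_closedBall.1 hy
      exact mem_ball.2 (by linarith))
    have hKnorm : ∀ y ∈ K, 1 + δ / 2 ≤ ‖y‖ := by
      intro y hy
      have h1 : dist y x₂ ≤ r := mem_closedBall.1 hy
      have h2 : |‖y‖ - ‖x₂‖| ≤ dist y x₂ := by
        rw [dist_eq_norm]
        exact abs_norm_sub_norm_le y x₂
      have h3 := (abs_le.1 h2).1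
      linarith [hx₂δ]
    have hKR : ∀ y ∈ K, ‖y‖ ≤ R := fun y hy => (mem_ball_zero_iff.1 (hΩR (hKΩ hy))).le
    have hKd : ∀ y ∈ K, r ≤ infDist y (frontier Ω) := by
      intro y hy
      apply le_infDist_of hfrne
      intro z hz
      by_contra hlt
      push_neg at hlt
      have h1 : dist y x₂ ≤ r := mem_closedBall.1 hy
      have hzΩ : z ∈ Ω := hr₀Ω (mem_ball.2 (by
        have h2 : dist z x₂ ≤ dist z y + dist y x₂ := dist_triangle z y x₂
        rw [dist_comm z y] at h2
        linarith))
      have hznΩ : z ∉ Ω := by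
        rw [hΩopen.frontier_eq] at hz
        exact hz.2
      exact hznΩ hzΩ
    have hKsub : K ⊆ Ω \ ball 0 1 := fun y hy => ⟨hKΩ hy, fun hmem => by
      have h1 := mem_ball_zero_iff.1 hmem
      have h2 := hKnorm y hy
      linarith⟩
    -- constants
    obtain ⟨β, hβdef⟩ : ∃ β : ℝ, β = c / ((R ^ 2 - 1) ^ s * R ^ (n:ℝ)) := ⟨_, rfl⟩
    have hβpos : 0 < β := by
      rw [hβdef]
      apply div_pos hc
      have hR21 : (0:ℝ) < R ^ 2 - 1 := by
        have := one_lt_pow₀ hR (two_ne_zero)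
        linarith
      apply mul_pos (Real.rpow_pos_of_pos hR21 s) (Real.rpow_pos_of_pos hR0 _)
    have hβle : ∀ y ∈ K, β ≤ poissonBall n c s 0 1 0 y := by
      intro y hy
      rw [pois1_eq, hβdef]
      have h1 : 1 + δ / 2 ≤ ‖y‖ := hKnorm y hy
      have h2 : ‖y‖ ≤ R := hKR y hy
      have hy1 : 1 < ‖y‖ := by linarith
      have hy2 : 0 < ‖y‖ ^ 2 - 1 := by
        have := one_lt_pow₀ hy1 (two_ne_zero)
        linarith
      have hyR : ‖y‖ ^ 2 ≤ R ^ 2 := pow_le_pow_left₀ (norm_nonneg y) h2 2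
      apply div_le_div_of_nonneg_left hc.le (by positivity)
      exact mul_le_mul (Real.rpow_le_rpow hy2.le (by linarith) hs0.le)
        (Real.rpow_le_rpow (norm_nonneg y) h2 (by positivity)) (by positivity)
        (Real.rpow_nonneg (by linarith) s)
    obtain ⟨V, hVdef⟩ : ∃ V : ℝ, V = (volume K).toReal := ⟨_, rfl⟩
    have hV : 0 < V := by
      rw [hVdef, hKdef]
      exact ENNReal.toReal_pos (measure_closedBall_pos volume x₂ hr).ne'
        measure_closedBall_lt_top.ne
    have hR1 : (0:ℝ) < R - 1 := by linarith
    obtain ⟨E, hEdef⟩ : ∃ E : ℝ, E = c₀ * r ^ s * β * V / (2 ^ (n:ℝ) * (1 + cbar) ^ s) := ⟨_, rfl⟩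
    have hEpos : 0 < E := by
      rw [hEdef]
      apply div_pos
      · positivity
      · positivity
    obtain ⟨W, hWdef⟩ : ∃ W : ℝ, W = c * (2 * (R - 1)) ^ s / E := ⟨_, rfl⟩
    have hWpos : 0 < W := by
      rw [hWdef]
      apply div_pos (by positivity) hEpos
    obtain ⟨μ, hμdef⟩ : ∃ μ : ℝ, μ = max (max (2 * R) 2) (2 * W ^ s⁻¹) + 1 := ⟨_, rfl⟩
    have hμR : 2 * R + 1 ≤ μ := by
      have h1 := le_max_left (max (2 * R) 2) (2 * W ^ s⁻¹)
      have h2 := le_max_left (2 * R) 2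
      rw [hμdef]; linarith
    have hμ2 : 3 ≤ μ := by
      have h1 := le_max_left (max (2 * R) 2) (2 * W ^ s⁻¹)
      have h2 := le_max_right (2 * R) 2
      rw [hμdef]; linarith
    have hμW : 2 * W ^ s⁻¹ + 1 ≤ μ := by
      have h1 := le_max_right (max (2 * R) 2) (2 * W ^ s⁻¹)
      rw [hμdef]; linarith
    have hμpos : (0:ℝ) < μ := by linarith
    have hμgtR : R < μ := by linarith
    -- the far-away point q in the direction of x₂
    set u : En n := ‖x₂‖⁻¹ • x₂ with hudef
    have hu : ‖u‖ = 1 := by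
      rw [hudef, norm_smul, Real.norm_eq_abs, abs_of_pos (inv_pos.2 hx₂pos),
        inv_mul_cancel₀ hx₂pos.ne']
    set q : En n := μ • u with hqdef
    have hnq : ‖q‖ = μ := by
      rw [hqdef, norm_smul, Real.norm_eq_abs, abs_of_pos hμpos, hu, mul_one]
    have hqout : q ∉ closure Ω := by
      intro h
      have := hclosR h
      rw [mem_closedBall, dist_zero_right] at this
      linarith [hnq ▸ this]
    obtain ⟨d, hddef⟩ : ∃ d : ℝ, d = infDist q (frontier Ω) := ⟨_, rfl⟩
    have hd1 : μ - R ≤ d := by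
      rw [hddef]
      apply le_infDist_of hfrne
      intro z hz
      have hzR : ‖z‖ ≤ R := by
        have := hfrR hz
        rwa [mem_closedBall, dist_zero_right] at this
      rw [dist_eq_norm]
      have := norm_sub_norm_le q z
      linarith [hnq ▸ this]
    have hdpos : 0 < d := by linarith
    have hd2 : d ≤ μ - (1 + δ) := by
      have hx₂u : (1 + δ) • u = x₂ := by
        rw [← hx₂δ, hudef, smul_smul, mul_inv_cancel₀ hx₂pos.ne', one_smul]
      set T : Set ℝ := {τ : ℝ | τ ∈ Icc (1 + δ) μ ∧ τ • u ∈ closure Ω} with hTdef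
      have hTmem : (1 + δ) ∈ T := by
        refine ⟨⟨le_refl _, by linarith [hx₂R, hx₂δ]⟩, ?_⟩
        rw [hx₂u]
        exact subset_closure hx₂Ω
      have hTbdd : BddAbove T := ⟨μ, fun τ hτ => hτ.1.2⟩
      have hTclosed : IsClosed T := by
        have h2 : IsClosed {τ : ℝ | τ • u ∈ closure Ω} :=
          isClosed_closure.preimage (continuous_id.smul continuous_const)
        exact isClosed_Icc.inter h2
      obtain ⟨τ, hτdef⟩ : ∃ τ : ℝ, τ = sSup T := ⟨_, rfl⟩
      have hτT : τ ∈ T := by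
        rw [hτdef]
        exact hTclosed.csSup_mem ⟨_, hTmem⟩ hTbdd
      have hτle : τ ≤ μ := hτT.1.2
      have hτge : 1 + δ ≤ τ := hτT.1.1
      have hτne : τ ≠ μ := by
        intro h
        apply hqout
        rw [hqdef, ← h]
        exact hτT.2
      have hτlt : τ < μ := lt_of_le_of_ne hτle hτne
      have hz : τ • u ∈ frontier Ω := by
        rw [hΩopen.frontier_eq]
        refine ⟨hτT.2, fun hzin => ?_⟩
        obtain ⟨ε, hε, hεΩ⟩ := Metric.isOpen_iff.1 hΩopen _ hzin
        set τ' : ℝ := min (τ + ε / 2) μ with hτ'def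
        have hτ'ge : τ ≤ τ' := le_min (by linarith) hτle
        have hτ'T : τ' ∈ T := by
          refine ⟨⟨by linarith, min_le_right _ _⟩, ?_⟩
          apply subset_closure
          apply hεΩ
          rw [mem_ball]
          have hdisteq : dist (τ' • u) (τ • u) = |τ' - τ| := by
            rw [dist_eq_norm, ← sub_smul, norm_smul, hu, mul_one, Real.norm_eq_abs]
          rw [hdisteq, abs_of_nonneg (by linarith)]
          have := min_le_left (τ + ε / 2) μ
          rw [hτ'def] at *
          linarith
        have h5 : τ' ≤ τ := by
          rw [hτdef]
          exact le_csSup hTbdd hτ'T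
        have hτ'gt : τ < τ' := by
          rw [hτ'def]
          exact lt_min (by linarith) hτlt
        linarith
      have h6 := infDist_le_dist_of_mem (x := q) hz
      have hdist6 : dist q (τ • u) = μ - τ := by
        rw [dist_eq_norm, hqdef, ← sub_smul, norm_smul, hu, mul_one, Real.norm_eq_abs,
          abs_of_nonneg (by linarith)]
      rw [hdist6] at h6
      rw [hddef]
      linarith
    -- pointwise lower bound for the integrand on K
    have hlowK : ∀ y ∈ K,
        c₀ * r ^ s / ((R + μ) ^ (n:ℝ) * d ^ s * (1 + cbar * d) ^ s) * β
          ≤ P y q * poissonBall n c s 0 1 0 y := by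
      intro y hy
      have hyΩ := hKΩ hy
      have h1 := hPlow y hyΩ q hqout
      rw [← hddef] at h1
      have hyq : ‖y - q‖ ≤ R + μ := by
        have h2 := norm_sub_le y q
        rw [hnq] at h2
        linarith [hKR y hy]
      have hyqpos : (0:ℝ) < ‖y - q‖ := by
        rw [norm_sub_pos_iff]
        intro h
        exact hqout (h ▸ subset_closure hyΩ)
      have hZpos : (0:ℝ) < (1 + cbar * d) ^ s :=
        Real.rpow_pos_of_pos (by have := mul_pos hcbar hdpos; linarith) s
      have hstep : c₀ * r ^ s / ((R + μ) ^ (n:ℝ) * d ^ s * (1 + cbar * d) ^ s)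
          ≤ c₀ * (infDist y (frontier Ω)) ^ s
            / (‖y - q‖ ^ (n:ℝ) * d ^ s * (1 + cbar * d) ^ s) := by
        apply div_le_div₀ (mul_nonneg hc₀.le (Real.rpow_nonneg infDist_nonneg s))
          (mul_le_mul_of_nonneg_left
            (Real.rpow_le_rpow hr.le (hKd y hy) hs0.le) hc₀.le)
          (by positivity)
        apply mul_le_mul_of_nonneg_right _ hZpos.le
        apply mul_le_mul_of_nonneg_right _ (by positivity)
        exact Real.rpow_le_rpow (norm_nonneg _) hyq (by positivity)
      have h2 : c₀ * r ^ s / ((R + μ) ^ (n:ℝ) * d ^ s * (1 + cbar * d) ^ s) ≤ P y q :=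
        hstep.trans h1
      have hpoisy : 0 ≤ poissonBall n c s 0 1 0 y := hβpos.le.trans (hβle y hy)
      exact mul_le_mul h2 (hβle y hy) hβpos.le
        ((div_nonneg (by positivity) (by positivity)).trans h2)
    -- the integral identity at q
    have hA := hPid q hqout
    have hFq := hFP q hqout
    rw [hc1, one_mul] at hFq
    obtain ⟨Nn, hNn⟩ : ∃ Nn : ℝ, Nn = μ ^ (n:ℝ) := ⟨_, rfl⟩
    obtain ⟨X, hX⟩ : ∃ X : ℝ, X = d ^ s * (2 + d) ^ s := ⟨_, rfl⟩
    obtain ⟨Y, hY⟩ : ∃ Y : ℝ, Y = (μ ^ 2 - 1) ^ s := ⟨_, rfl⟩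
    have hNpos : 0 < Nn := by rw [hNn]; positivity
    have hXpos : 0 < X := by
      rw [hX]
      exact mul_pos (Real.rpow_pos_of_pos hdpos s) (Real.rpow_pos_of_pos (by linarith) s)
    have hYpos : 0 < Y := by
      rw [hY]
      refine Real.rpow_pos_of_pos ?_ s
      have : (1:ℝ) < μ ^ 2 := one_lt_pow₀ (by linarith) two_ne_zero
      linarith
    have hXeq : X = (d * (2 + d)) ^ s := by
      rw [hX, ← Real.mul_rpow hdpos.le (by linarith)]
    have hFval : FOm n c s Ω q = c / (Nn * X) := by
      simp only [FOm]
      rw [← hddef, hnq, ← hNn, mul_assoc, ← hX]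
    have hpoisq : poissonBall n c s 0 1 0 q = c / (Y * Nn) := by
      rw [pois1_eq, hnq, ← hY, ← hNn]
    have hint_eq : (∫ y in Ω \ ball (0 : En n) 1, P y q * poissonBall n c s 0 1 0 y)
        = c / (Nn * X) - c / (Y * Nn) := by
      rw [← hFval, ← hpoisq]
      linarith [hA, hFq]
    have hdlt : d * (2 + d) < μ ^ 2 - 1 := by
      have e1 : 1 + d ≤ μ - δ := by linarith
      have e2 : (1 + d) ^ 2 ≤ (μ - δ) ^ 2 := by
        apply pow_le_pow_left₀ (by linarith) e1
      have e3 : (μ - δ) ^ 2 < μ ^ 2 := by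
        have e5 : 0 < δ * (2 * μ - δ) := mul_pos hδ (by linarith)
        have e6 : μ ^ 2 - (μ - δ) ^ 2 = δ * (2 * μ - δ) := by ring
        linarith
      have e4 : d * (2 + d) = (1 + d) ^ 2 - 1 := by ring
      linarith
    have hApos : 0 < c / (Nn * X) - c / (Y * Nn) := by
      have hXY : X < Y := by
        rw [hXeq, hY]
        exact Real.rpow_lt_rpow (by positivity) hdlt hs0
      have h7 : c / (Nn * Y) < c / (Nn * X) :=
        div_lt_div_of_pos_left hc (by positivity) ((mul_lt_mul_iff_right₀ hNpos).2 hXY)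
      have h8 : Y * Nn = Nn * Y := mul_comm _ _
      rw [h8]
      linarith
    have hInt : IntegrableOn (fun y => P y q * poissonBall n c s 0 1 0 y)
        (Ω \ ball (0 : En n) 1) volume := by
      by_contra hni
      rw [MeasureTheory.integral_undef hni] at hint_eq
      linarith
    have hmeas : MeasurableSet (Ω \ ball (0 : En n) 1) :=
      hΩopen.measurableSet.diff measurableSet_ball
    have hg0 : ∀ y ∈ Ω \ ball (0 : En n) 1, 0 ≤ P y q * poissonBall n c s 0 1 0 y := by
      intro y hy
      apply mul_nonneg (hPnonneg y hy.1 q hqout)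
      rw [pois1_eq]
      have h1 : 1 ≤ ‖y‖ := by
        by_contra h
        push_neg at h
        exact hy.2 (mem_ball_zero_iff.2 h)
      have h2 : (1:ℝ) ≤ ‖y‖ ^ 2 := by
        calc (1:ℝ) = 1 ^ 2 := by norm_num
          _ ≤ ‖y‖ ^ 2 := pow_le_pow_left₀ zero_le_one h1 2
      exact div_nonneg hc.le (mul_nonneg (Real.rpow_nonneg (by linarith) s)
        (Real.rpow_nonneg (norm_nonneg y) _))
    have hKle : (∫ y in K, P y q * poissonBall n c s 0 1 0 y)
        ≤ ∫ y in Ω \ ball (0 : En n) 1, P y q * poissonBall n c s 0 1 0 y :=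
      setIntegral_mono_set hInt ((ae_restrict_iff' hmeas).2 (ae_of_all _ hg0))
        (HasSubset.Subset.eventuallyLE hKsub)
    have hKint : c₀ * r ^ s / ((R + μ) ^ (n:ℝ) * d ^ s * (1 + cbar * d) ^ s) * β * V
        ≤ ∫ y in K, P y q * poissonBall n c s 0 1 0 y := by
      have hconst : IntegrableOn
          (fun _ : En n => c₀ * r ^ s / ((R + μ) ^ (n:ℝ) * d ^ s * (1 + cbar * d) ^ s) * β)
          K volume := by
        exact integrableOn_const measure_closedBall_lt_top.ne
      have h1 := setIntegral_mono_on hconst (hInt.mono_set hKsub)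
        (hKdef ▸ measurableSet_closedBall) hlowK
      rwa [setIntegral_const, smul_eq_mul, measureReal_def, ← hVdef, mul_comm V _] at h1
    have hchain : c₀ * r ^ s / ((R + μ) ^ (n:ℝ) * d ^ s * (1 + cbar * d) ^ s) * β * V
        ≤ c / (Nn * X) - c / (Y * Nn) := by
      rw [← hint_eq]
      exact hKint.trans hKle
    -- final quantitative contradiction
    have hμs : W < (μ / 2) ^ s := by
      have h1 : W ^ s⁻¹ < μ / 2 := by linarith [Real.rpow_nonneg hWpos.le s⁻¹]
      have h2 := Real.rpow_lt_rpow (Real.rpow_nonneg hWpos.le s⁻¹) h1 hs0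
      rwa [← Real.rpow_mul hWpos.le, inv_mul_cancel₀ hs0.ne', Real.rpow_one] at h2
    have hBd1 : Y - X ≤ (2 * (R - 1)) ^ s * μ ^ s := by
      have h1 : Y - X ≤ (μ ^ 2 - 1 - d * (2 + d)) ^ s := by
        rw [hXeq, hY]
        exact rpow_sub_le (by positivity) hdlt.le hs0.le hs1.le
      have h2 : (μ ^ 2 - 1 - d * (2 + d)) ^ s ≤ (2 * (R - 1) * μ) ^ s := by
        apply Real.rpow_le_rpow (by linarith [hdlt]) _ hs0.le
        linarith [mul_nonneg (show (0:ℝ) ≤ R - 1 - (μ - 1 - d) by linarith)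
            (show (0:ℝ) ≤ μ + 1 + d by linarith),
          mul_nonneg (show (0:ℝ) ≤ 2 * μ - (μ + 1 + d) by linarith)
            (show (0:ℝ) ≤ R - 1 by linarith)]
      calc Y - X ≤ (μ ^ 2 - 1 - d * (2 + d)) ^ s := h1
        _ ≤ (2 * (R - 1) * μ) ^ s := h2
        _ = (2 * (R - 1)) ^ s * μ ^ s := Real.mul_rpow (by linarith) hμpos.le
    have hYlow : μ ^ s * (μ / 2) ^ s ≤ Y := by
      rw [hY, ← Real.mul_rpow hμpos.le (by positivity)]
      refine Real.rpow_le_rpow (by positivity) ?_ hs0.le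
      have e1 : (9:ℝ) ≤ μ * μ := by
        calc (9:ℝ) = 3 * 3 := by norm_num
          _ ≤ μ * μ := mul_le_mul hμ2 hμ2 (by norm_num) (by linarith)
      have e2 : μ * (μ / 2) = μ * μ / 2 := by ring
      have e3 : μ ^ 2 = μ * μ := by ring
      linarith
    have hAeq2 : c / (Nn * X) - c / (Y * Nn) = c * (Y - X) / (Nn * X * Y) := by
      field_simp
    have hμspos : (0:ℝ) < (μ / 2) ^ s := Real.rpow_pos_of_pos (by linarith) s
    have hμsp2 : (0:ℝ) < μ ^ s := Real.rpow_pos_of_pos hμpos s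
    have hstep1 : c * (Y - X) / (Nn * X * Y)
        ≤ c * ((2 * (R - 1)) ^ s * μ ^ s) / (Nn * X * (μ ^ s * (μ / 2) ^ s)) := by
      apply div_le_div₀ (by positivity) (mul_le_mul_of_nonneg_left hBd1 hc.le)
        (by positivity)
      exact mul_le_mul_of_nonneg_left hYlow (by positivity)
    have hstep2 : c * ((2 * (R - 1)) ^ s * μ ^ s) / (Nn * X * (μ ^ s * (μ / 2) ^ s))
        = c * (2 * (R - 1)) ^ s / (Nn * X * (μ / 2) ^ s) := by
      field_simp
    have hstep3 : c * (2 * (R - 1)) ^ s / (Nn * X * (μ / 2) ^ s) < E / (Nn * X) := by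
      rw [div_lt_div_iff₀ (by positivity) (by positivity)]
      have h1 : c * (2 * (R - 1)) ^ s < E * (μ / 2) ^ s := by
        have h2 := hμs
        rw [hWdef, div_lt_iff₀ hEpos] at h2
        rw [mul_comm ((μ / 2) ^ s) E] at h2
        exact h2
      calc c * (2 * (R - 1)) ^ s * (Nn * X) = Nn * X * (c * (2 * (R - 1)) ^ s) := by ring
        _ < Nn * X * (E * (μ / 2) ^ s) := (mul_lt_mul_iff_right₀ (mul_pos hNpos hXpos)).2 h1
        _ = E * (Nn * X * (μ / 2) ^ s) := by ring
    have hstep4 : E / (Nn * X)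
        ≤ c₀ * r ^ s / ((R + μ) ^ (n:ℝ) * d ^ s * (1 + cbar * d) ^ s) * β * V := by
      have hDeq : c₀ * r ^ s / ((R + μ) ^ (n:ℝ) * d ^ s * (1 + cbar * d) ^ s) * β * V
          = c₀ * r ^ s * β * V / ((R + μ) ^ (n:ℝ) * d ^ s * (1 + cbar * d) ^ s) := by
        ring
      have hEeq : E / (Nn * X)
          = c₀ * r ^ s * β * V / (2 ^ (n:ℝ) * (1 + cbar) ^ s * (Nn * X)) := by
        rw [hEdef, div_div]
      rw [hDeq, hEeq]
      apply div_le_div_of_nonneg_left (by positivity) _ _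
      · have hZpos : (0:ℝ) < (1 + cbar * d) ^ s :=
          Real.rpow_pos_of_pos (by have := mul_pos hcbar hdpos; linarith) s
        positivity
      · have h1 : (R + μ) ^ (n:ℝ) ≤ 2 ^ (n:ℝ) * Nn := by
          rw [hNn, ← Real.mul_rpow (by norm_num) hμpos.le]
          exact Real.rpow_le_rpow (by linarith) (by linarith) (by positivity)
        have h2 : (1 + cbar * d) ^ s ≤ (1 + cbar) ^ s * (2 + d) ^ s := by
          rw [← Real.mul_rpow (by linarith) (by linarith)]
          have e1 : 0 ≤ cbar * d := (mul_pos hcbar hdpos).le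
          refine Real.rpow_le_rpow (by linarith) ?_ hs0.le
          have e2 : (1 + cbar) * (2 + d) = 2 + d + 2 * cbar + cbar * d := by ring
          linarith
        calc (R + μ) ^ (n:ℝ) * d ^ s * (1 + cbar * d) ^ s
            ≤ (2 ^ (n:ℝ) * Nn) * d ^ s * ((1 + cbar) ^ s * (2 + d) ^ s) := by
              apply mul_le_mul (mul_le_mul_of_nonneg_right h1 (by positivity)) h2
                (Real.rpow_nonneg (by have := mul_pos hcbar hdpos; linarith) s) (by positivity)
          _ = 2 ^ (n:ℝ) * (1 + cbar) ^ s * (Nn * X) := by rw [hX]; ring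
    have hfinal : c / (Nn * X) - c / (Y * Nn)
        < c₀ * r ^ s / ((R + μ) ^ (n:ℝ) * d ^ s * (1 + cbar * d) ^ s) * β * V := by
      rw [hAeq2]
      calc c * (Y - X) / (Nn * X * Y)
          ≤ c * ((2 * (R - 1)) ^ s * μ ^ s) / (Nn * X * (μ ^ s * (μ / 2) ^ s)) := hstep1
        _ = c * (2 * (R - 1)) ^ s / (Nn * X * (μ / 2) ^ s) := hstep2
        _ < E / (Nn * X) := hstep3
        _ ≤ _ := hstep4
    linarith
  · -- Ω = ball 0 1 → cΩ = 1
    intro hΩeq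
    subst hΩeq
    have hfr : frontier (ball (0 : En n) 1) = sphere 0 1 := frontier_ball 0 one_ne_zero
    have heq : EqOn (FOm n c s (ball 0 1))
        (fun y => c * (((‖y‖ ^ 2 - 1) ^ s) * ‖y‖ ^ (n:ℝ))⁻¹) ((ball (0 : En n) 1)ᶜ) := by
      intro y hy
      have hy1 : 1 ≤ ‖y‖ := by
        by_contra h
        push_neg at h
        exact hy (mem_ball_zero_iff.2 h)
      simp only [FOm, hfr, infDist_sphere_one hn hy1]
      have h2 : (2 : ℝ) + (‖y‖ - 1) = 1 + ‖y‖ := by ring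
      rw [h2]
      have h3 : (‖y‖ - 1) ^ s * (1 + ‖y‖) ^ s = (‖y‖ ^ 2 - 1) ^ s := by
        rw [← Real.mul_rpow (by linarith) (by linarith)]
        congr 1
        ring
      rw [div_eq_mul_inv]
      congr 1
      rw [mul_assoc, h3]
      ring
    rw [hcΩ]
    have hcompl : (ball (0 : En n) 1)ᶜ = (ball (0 : En n) 1)ᶜ := rfl
    rw [setIntegral_congr_fun measurableSet_ball.compl heq]
    rw [MeasureTheory.integral_const_mul]
    exact hnorm

end
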